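/- Let ε ∈ (0,1), let n, d be positive integers, and let X = (x^1,…,x^n) be a sequence in [0,1)^d. Let x* ∈ [0,1]^d satisfy δ(x*) = sup_{x∈[0,1]^d} δ(x) and assume V_{x*} ≥ ε. Then the Lebesgue measure of the set { r ∈ [0,1]^d : δ(x*) − δ(r) ≤ ε } is at least (1/d!) · ε^d / V_{x*}^{d−1}, and in particular at least ε^d/d!. -/

import Mathlib

open Finset MeasureTheory
open scoped ENNReal

noncomputable def starVol {d : ℕ} (y : Fin d → ℝ) : ℝ := ∏ j, y j

noncomputable def countOpen {n d : ℕ} (X : Fin n → Fin d → ℝ) (y : Fin d → ℝ) : ℕ :=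
  (Finset.univ.filter fun i => ∀ j, X i j < y j).card

/-- δ(y) = V_y - A(y,X)/n -/
noncomputable def delta {n d : ℕ} (X : Fin n → Fin d → ℝ) (y : Fin d → ℝ) : ℝ :=
  starVol y - (countOpen X y : ℝ) / n

section Aux

lemma weier {ι : Type*} (s : Finset ι) (f : ι → ℝ) (h0 : ∀ i ∈ s, 0 ≤ f i)
    (h1 : ∀ i ∈ s, f i ≤ 1) : 1 - ∑ i ∈ s, f i ≤ ∏ i ∈ s, (1 - f i) := by
  classical
  induction s using Finset.induction with
  | empty => simp
  | insert _ _ ha ih =>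
    rename_i a s
    rw [Finset.sum_insert ha, Finset.prod_insert ha]
    have hS : 0 ≤ ∑ i ∈ s, f i := Finset.sum_nonneg fun i hi => h0 i (Finset.mem_insert_of_mem hi)
    have hP : 0 ≤ ∏ i ∈ s, (1 - f i) :=
      Finset.prod_nonneg fun i hi => by linarith [h1 i (Finset.mem_insert_of_mem hi)]
    have ihs : 1 - ∑ i ∈ s, f i ≤ ∏ i ∈ s, (1 - f i) :=
      ih (fun i hi => h0 i (Finset.mem_insert_of_mem hi))
        (fun i hi => h1 i (Finset.mem_insert_of_mem hi))
    have ha0 : 0 ≤ f a := h0 a (Finset.mem_insert_self a s)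
    have ha1 : f a ≤ 1 := h1 a (Finset.mem_insert_self a s)
    nlinarith

noncomputable def pre {d : ℕ} (y : Fin d → ℝ) (i : Fin d) : ℝ :=
  if _h : (i : ℕ) = 0 then 0 else y ⟨(i : ℕ) - 1, lt_of_le_of_lt (Nat.sub_le _ _) i.isLt⟩

lemma telescope {d : ℕ} (hd : 0 < d) (y : Fin d → ℝ) :
    ∑ i, (y i - pre y i) = y ⟨d - 1, Nat.sub_lt hd one_pos⟩ := by
  have key : ∀ m : ℕ, m ≤ d → ∑ k ∈ Finset.range m, (fun k =>
      (if h : k < d then y ⟨k, h⟩ else 0) -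
      (if h : k = 0 then 0 else if h2 : k - 1 < d then y ⟨k - 1, h2⟩ else 0)) k
      = (if h : m = 0 then 0 else if h2 : m - 1 < d then y ⟨m - 1, h2⟩ else 0) := by
    intro m hm
    induction m with
    | zero => simp
    | succ p ihp =>
      rw [Finset.sum_range_succ, ihp (le_of_lt (Nat.lt_of_succ_le hm))]
      have hp : p < d := Nat.lt_of_succ_le hm
      simp [hp, Nat.succ_ne_zero]
  have h2 := key d le_rfl
  rw [← Fin.sum_univ_eq_sum_range] at h2
  rw [dif_neg hd.ne', dif_pos (Nat.sub_lt hd one_pos)] at h2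
  rw [← h2]
  apply Finset.sum_congr rfl
  intro i _
  simp only [i.isLt, dif_pos, Fin.eta]
  congr 1
  by_cases h : (i:ℕ) = 0
  · simp [pre, h]
  · rw [pre, dif_neg h, dif_neg h, dif_pos (lt_of_le_of_lt (Nat.sub_le _ _) i.isLt)]

lemma ord_vol (d : ℕ) :
    ENNReal.ofReal (1 / (d.factorial : ℝ)) ≤
      volume {y : Fin d → ℝ | (∀ j, y j ∈ Set.Icc (0:ℝ) 1) ∧ Monotone y} := by
  set Ord := {y : Fin d → ℝ | (∀ j, y j ∈ Set.Icc (0:ℝ) 1) ∧ Monotone y} with hOrd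
  have hmeas : MeasurableSet Ord := by
    have hA : MeasurableSet {y : Fin d → ℝ | ∀ j, y j ∈ Set.Icc (0:ℝ) 1} := by
      rw [Set.setOf_forall]
      exact MeasurableSet.iInter fun j => measurable_pi_apply j measurableSet_Icc
    have hB : MeasurableSet {y : Fin d → ℝ | Monotone y} := by
      have : {y : Fin d → ℝ | Monotone y} = ⋂ (i) (j) (_ : i ≤ j), {y | y i ≤ y j} := by
        ext y; simp [Monotone]
      rw [this]
      exact MeasurableSet.iInter fun i => MeasurableSet.iInter fun j =>
        MeasurableSet.iInter fun _ =>
          measurableSet_le (measurable_pi_apply i) (measurable_pi_apply j)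
    rw [hOrd, Set.setOf_and]
    exact hA.inter hB
  set E : Equiv.Perm (Fin d) → ((Fin d → ℝ) ≃ᵐ (Fin d → ℝ)) := fun σ =>
    MeasurableEquiv.arrowCongr' σ (MeasurableEquiv.refl ℝ) with hE
  have hEapp : ∀ σ y, E σ y = y ∘ σ.symm := by
    intro σ y
    simp [hE, MeasurableEquiv.arrowCongr', Equiv.arrowCongr', Equiv.arrowCongr]
    rfl
  have hcover : (Set.pi Set.univ fun _ : Fin d => Set.Icc (0:ℝ) 1) ⊆
      ⋃ σ : Equiv.Perm (Fin d), (E σ) ⁻¹' Ord := by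
    intro y hy
    refine Set.mem_iUnion.2 ⟨(Tuple.sort y)⁻¹, ?_⟩
    simp only [Set.mem_preimage, hEapp]
    constructor
    · intro j; exact hy _ (Set.mem_univ _)
    · simpa [Equiv.Perm.inv_def] using Tuple.monotone_sort y
  have hvolcube : volume (Set.pi Set.univ fun _ : Fin d => Set.Icc (0:ℝ) 1) = 1 := by
    rw [volume_pi_pi]
    simp [Real.volume_Icc]
  have hpres : ∀ σ : Equiv.Perm (Fin d), volume ((E σ) ⁻¹' Ord) = volume Ord := by
    intro σ
    exact (volume_preserving_arrowCongr' _ (MeasurableEquiv.refl ℝ)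
      (MeasurePreserving.id _)).measure_preimage hmeas.nullMeasurableSet
  have h1 : (1 : ℝ≥0∞) ≤ (d.factorial : ℝ≥0∞) * volume Ord := by
    calc (1 : ℝ≥0∞) = volume (Set.pi Set.univ fun _ : Fin d => Set.Icc (0:ℝ) 1) := hvolcube.symm
    _ ≤ volume (⋃ σ : Equiv.Perm (Fin d), (E σ) ⁻¹' Ord) := measure_mono hcover
    _ ≤ ∑ σ : Equiv.Perm (Fin d), volume ((E σ) ⁻¹' Ord) := measure_iUnion_fintype_le _ _
    _ = ∑ _σ : Equiv.Perm (Fin d), volume Ord := by simp_rw [hpres]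
    _ = (d.factorial : ℝ≥0∞) * volume Ord := by
        rw [Finset.sum_const, nsmul_eq_mul, Finset.card_univ, Fintype.card_perm, Fintype.card_fin]
  have hfac : (0:ℝ) < d.factorial := Nat.cast_pos.2 d.factorial_pos
  rw [one_div, ENNReal.ofReal_inv_of_pos hfac, ENNReal.ofReal_natCast]
  rw [ENNReal.inv_le_iff_le_mul (by simp [d.factorial_ne_zero]) (by simp)]
  simpa [mul_comm] using h1

noncomputable def Mm {d : ℕ} (a : Fin d → ℝ) : Matrix (Fin d) (Fin d) ℝ :=
  fun i j => if j = i then -(a i) else if (j : ℕ) + 1 = (i : ℕ) then a i else 0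

lemma Mm_apply {d : ℕ} (a : Fin d → ℝ) (y : Fin d → ℝ) (i : Fin d) :
    Matrix.toLin' (Mm a) y i = a i * (pre y i - y i) := by
  rw [Matrix.toLin'_apply]
  show ∑ j, Mm a i j * y j = _
  have hsplit : ∀ j : Fin d, Mm a i j * y j =
      (if j = i then -(a i) * y j else 0) + (if (j:ℕ) + 1 = (i:ℕ) then a i * y j else 0) := by
    intro j
    by_cases h1 : j = i
    · have h2 : ¬ ((j:ℕ) + 1 = (i:ℕ)) := by subst h1; omega
      simp [Mm, h1, h2]
    · by_cases h2 : (j:ℕ) + 1 = (i:ℕ) <;> simp [Mm, h1, h2]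
  simp_rw [hsplit]
  rw [Finset.sum_add_distrib, Finset.sum_ite_eq' Finset.univ i (fun j => -(a i) * y j)]
  simp only [Finset.mem_univ, if_pos]
  have h2 : ∑ j : Fin d, (if (j:ℕ) + 1 = (i:ℕ) then a i * y j else 0) = a i * pre y i := by
    by_cases h : (i : ℕ) = 0
    · rw [Finset.sum_eq_zero, pre, dif_pos h]
      · ring
      · intro j _; rw [if_neg (by omega)]
    · have hlt : (i : ℕ) - 1 < d := lt_of_le_of_lt (Nat.sub_le _ _) i.isLt
      set i0 : Fin d := ⟨(i:ℕ) - 1, hlt⟩ with hi0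
      rw [Finset.sum_congr rfl (g := fun j => if j = i0 then a i * y j else 0)
        (fun j _ => by
          congr 1
          simp only [eq_iff_iff]
          constructor
          · intro hj; apply Fin.ext; simp [hi0]; omega
          · intro hj; subst hj; simp [hi0]; omega)]
      rw [Finset.sum_ite_eq' Finset.univ i0 (fun j => a i * y j)]
      simp only [Finset.mem_univ, if_pos]
      rw [pre, dif_neg h]
  rw [h2]; ring

lemma Mm_det {d : ℕ} (a : Fin d → ℝ) : (Mm a).det = ∏ i, -(a i) := by
  have htri : (Mm a).BlockTriangular OrderDual.toDual := by
    intro i j hij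
    have : i < j := hij
    rw [Mm, if_neg (by exact fun h => absurd h (by omega)), if_neg (by omega)]
  rw [Matrix.det_of_lowerTriangular _ htri]
  apply Finset.prod_congr rfl
  intro i _
  simp [Mm]

end Aux

theorem stmt9 (n d : ℕ) (hn : 0 < n) (hd : 0 < d) (ε : ℝ) (hε : ε ∈ Set.Ioo (0 : ℝ) 1)
    (X : Fin n → Fin d → ℝ) (hX : ∀ i j, X i j ∈ Set.Ico (0 : ℝ) 1)
    (xs : Fin d → ℝ) (hxs : ∀ j, xs j ∈ Set.Icc (0 : ℝ) 1)
    (hmax : ∀ x : Fin d → ℝ, (∀ j, x j ∈ Set.Icc (0 : ℝ) 1) → delta X x ≤ delta X xs)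
    (hV : ε ≤ starVol xs) :
    ENNReal.ofReal ((1 / (d.factorial : ℝ)) * ε ^ d / starVol xs ^ (d - 1)) ≤
      volume {r : Fin d → ℝ | (∀ j, r j ∈ Set.Icc (0 : ℝ) 1) ∧
        delta X xs - delta X r ≤ ε} ∧
    ENNReal.ofReal (ε ^ d / (d.factorial : ℝ)) ≤
      volume {r : Fin d → ℝ | (∀ j, r j ∈ Set.Icc (0 : ℝ) 1) ∧
        delta X xs - delta X r ≤ ε} := by
  set V : ℝ := starVol xs with hVdef
  have hε0 : (0:ℝ) < ε := hε.1
  have hV0 : (0:ℝ) < V := lt_of_lt_of_le hε0 hV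
  have hxpos : ∀ j, 0 < xs j := by
    intro j
    rcases lt_or_eq_of_le (hxs j).1 with h | h
    · exact h
    · exfalso
      have : V = 0 := by
        rw [hVdef, starVol, Finset.prod_eq_zero (Finset.mem_univ j) h.symm]
      exact absurd this (ne_of_gt hV0)
  have hV1 : V ≤ 1 := by
    rw [hVdef, starVol]
    exact Finset.prod_le_one (fun j _ => (hxs j).1) (fun j _ => (hxs j).2)
  set c : ℝ := ε / V with hcdef
  have hc0 : 0 < c := div_pos hε0 hV0
  have hc1 : c ≤ 1 := (div_le_one hV0).2 hV
  have hcV : c * V = ε := by rw [hcdef]; field_simp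
  set a : Fin d → ℝ := fun j => c * xs j with hadef
  set L := Matrix.toLin' (Mm a) with hLdef
  set Ord := {y : Fin d → ℝ | (∀ j, y j ∈ Set.Icc (0:ℝ) 1) ∧ Monotone y} with hOrd
  set T := {r : Fin d → ℝ | (∀ j, r j ∈ Set.Icc (0 : ℝ) 1) ∧ delta X xs - delta X r ≤ ε}
      with hT
  -- the image of Ord under y ↦ xs + L y is contained in T
  have hsub : (fun y => xs + L y) '' Ord ⊆ T := by
    rintro _ ⟨y, ⟨hyIcc, hyMono⟩, rfl⟩
    set u : Fin d → ℝ := fun j => y j - pre y j with hudef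
    have hr : ∀ j, (xs + L y) j = xs j * (1 - c * u j) := by
      intro j
      show xs j + L y j = _
      rw [hLdef, Mm_apply]
      simp only [hadef, hudef]
      ring
    have hpre0 : ∀ j, 0 ≤ pre y j := by
      intro j
      by_cases h : (j:ℕ) = 0
      · rw [pre, dif_pos h]
      · rw [pre, dif_neg h]; exact (hyIcc _).1
    have hu0 : ∀ j, 0 ≤ u j := by
      intro j
      by_cases h : (j:ℕ) = 0
      · simp only [hudef, pre, dif_pos h, sub_zero]; exact (hyIcc j).1
      · simp only [hudef, pre, dif_neg h, sub_nonneg]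
        exact hyMono (by rw [Fin.le_def]; exact Nat.sub_le _ _)
    have hu1 : ∀ j, u j ≤ 1 := by
      intro j
      have := (hyIcc j).2
      have := hpre0 j
      simp only [hudef]; linarith
    have hsum : ∑ j, u j ≤ 1 := by
      rw [hudef, telescope hd y]
      exact (hyIcc _).2
    have hcu : ∀ j, 0 ≤ c * u j ∧ c * u j ≤ 1 := by
      intro j
      constructor
      · exact mul_nonneg hc0.le (hu0 j)
      · calc c * u j ≤ c * 1 := by
              apply mul_le_mul_of_nonneg_left (hu1 j) hc0.le
        _ ≤ 1 := by linarith
    have hrIcc : ∀ j, (xs + L y) j ∈ Set.Icc (0:ℝ) 1 := by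
      intro j
      rw [hr j]
      constructor
      · exact mul_nonneg (hxpos j).le (by linarith [(hcu j).2])
      · calc xs j * (1 - c * u j) ≤ xs j * 1 := by
              apply mul_le_mul_of_nonneg_left (by linarith [(hcu j).1]) (hxpos j).le
        _ ≤ 1 := by rw [mul_one]; exact (hxs j).2
    refine ⟨hrIcc, ?_⟩
    -- count monotonicity
    have hrle : ∀ j, (xs + L y) j ≤ xs j := by
      intro j
      rw [hr j]
      calc xs j * (1 - c * u j) ≤ xs j * 1 := by
            apply mul_le_mul_of_nonneg_left (by linarith [(hcu j).1]) (hxpos j).le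
      _ = xs j := mul_one _
    have hcount : countOpen X (xs + L y) ≤ countOpen X xs := by
      apply Finset.card_le_card
      intro i hi
      rw [Finset.mem_filter] at hi ⊢
      exact ⟨hi.1, fun j => lt_of_lt_of_le (hi.2 j) (hrle j)⟩
    -- product lower bound
    have hprod : V - ε ≤ starVol (xs + L y) := by
      have h1 : starVol (xs + L y) = V * ∏ j, (1 - c * u j) := by
        rw [starVol]
        rw [Finset.prod_congr rfl (fun j _ => hr j), Finset.prod_mul_distrib]
        rfl
      have h2 : 1 - c ≤ ∏ j, (1 - c * u j) := by
        have hw := weier Finset.univ (fun j => c * u j)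
          (fun j _ => (hcu j).1) (fun j _ => (hcu j).2)
        have hs : ∑ j, c * u j = c * ∑ j, u j := by rw [Finset.mul_sum]
        have : 1 - c ≤ 1 - ∑ j, c * u j := by
          rw [hs]
          have : c * ∑ j, u j ≤ c * 1 := mul_le_mul_of_nonneg_left hsum hc0.le
          linarith
        linarith
      calc V - ε = V * (1 - c) := by rw [mul_sub, mul_one, mul_comm V c, hcV]
      _ ≤ V * ∏ j, (1 - c * u j) := mul_le_mul_of_nonneg_left h2 hV0.le
      _ = starVol (xs + L y) := h1.symm
    have hcountr : (countOpen X (xs + L y) : ℝ) / n ≤ (countOpen X xs : ℝ) / n := by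
      have hc' : (countOpen X (xs + L y) : ℝ) ≤ countOpen X xs := by exact_mod_cast hcount
      gcongr
    show delta X xs - delta X (xs + L y) ≤ ε
    rw [delta, delta]
    have : starVol xs - starVol (xs + L y) ≤ ε := by
      rw [← hVdef]; linarith
    linarith
  -- measure computation
  have hdet : |LinearMap.det L| = ε ^ d / V ^ (d - 1) := by
    rw [hLdef, LinearMap.det_toLin', Mm_det, Finset.abs_prod]
    have h1 : ∀ i : Fin d, |-(a i)| = a i := by
      intro i
      rw [abs_neg, abs_of_pos (mul_pos hc0 (hxpos i))]
    rw [Finset.prod_congr rfl (fun i _ => h1 i)]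
    have h2 : ∏ i : Fin d, a i = c ^ d * V := by
      rw [hadef, Finset.prod_mul_distrib, Finset.prod_const, Finset.card_univ,
        Fintype.card_fin, hVdef]
      rfl
    rw [h2, hcdef, div_pow]
    have hVd1 : (0:ℝ) < V ^ (d-1) := pow_pos hV0 _
    rw [eq_div_iff hVd1.ne']
    have hVd : V * V ^ (d-1) = V ^ d := by
      rw [← pow_succ', Nat.sub_add_cancel hd]
    rw [mul_assoc, hVd, div_mul_cancel₀ _ (pow_ne_zero d hV0.ne')]
  have hchain : ENNReal.ofReal ((1 / (d.factorial : ℝ)) * ε ^ d / V ^ (d - 1)) ≤ volume T := by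
    calc ENNReal.ofReal ((1 / (d.factorial : ℝ)) * ε ^ d / V ^ (d - 1))
        = ENNReal.ofReal ((ε ^ d / V ^ (d-1)) * (1 / (d.factorial : ℝ))) := by
          congr 1; ring
    _ = ENNReal.ofReal (ε ^ d / V ^ (d-1)) * ENNReal.ofReal (1 / (d.factorial : ℝ)) := by
          rw [ENNReal.ofReal_mul (by positivity)]
    _ ≤ ENNReal.ofReal (ε ^ d / V ^ (d-1)) * volume Ord := by
          exact mul_le_mul_right (ord_vol d) _
    _ = ENNReal.ofReal |LinearMap.det L| * volume Ord := by rw [hdet]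
    _ = volume (L '' Ord) := (Measure.addHaar_image_linearMap volume L Ord).symm
    _ = volume ((fun y => xs + L y) '' Ord) := by
          rw [← Set.image_image (fun v => xs + v) (fun y => L y) Ord, Set.image_add_left,
            measure_preimage_add]
    _ ≤ volume T := measure_mono hsub
  constructor
  · exact hchain
  · refine le_trans ?_ hchain
    apply ENNReal.ofReal_le_ofReal
    have hVd1 : (0:ℝ) < V ^ (d-1) := pow_pos hV0 _
    have hVd1le : V ^ (d-1) ≤ 1 := pow_le_one₀ hV0.le hV1
    rw [div_le_div_iff₀ (by positivity) hVd1]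
    calc ε ^ d * V ^ (d-1) ≤ ε ^ d * 1 := by
          apply mul_le_mul_of_nonneg_left hVd1le (by positivity)
    _ = (1 / (d.factorial : ℝ)) * ε ^ d * (d.factorial : ℝ) := by
          field_simp
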